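/- Let α ∈ R^+ and consider α-strings of alcoves {α↑^n A : n ∈ ℤ}. If A ∈ 𝒜_α^- (i.e., A = A_x with x ∈ W and A ⊂ H_{α,0}^-), then the intersection of the support {A_x : x ∈ W} of the finite Weyl group orbit with the α-string of A is exactly {A, α↑A}; similarly if A ∈ 𝒜_α^+ it is {α↓A, A}. In particular, each α-string meets {A_x : x ∈ W} in exactly two consecutive alcoves. -/

import Mathlib

open Module

section Preliminaries

variable {V : Type*} [AddCommGroup V] [Module ℚ V]

/-- Data of a reduced irreducible root system `R` in a `ℚ`-vector space `V`,
with positive roots, simple roots, coroots (in the dual space) and highest root. -/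
structure RootSystemData (V : Type*) [AddCommGroup V] [Module ℚ V] where
  R : Set V
  Rpos : Set V
  Δ : Set V
  coroot : V → Module.Dual ℚ V
  highest : V
  finite_R : R.Finite
  nonempty_R : R.Nonempty
  pos_subset : Rpos ⊆ R
  simple_subset : Δ ⊆ Rpos
  coroot_self : ∀ α ∈ R, coroot α α = 2
  neg_mem : ∀ α ∈ R, -α ∈ R
  coroot_neg : ∀ α ∈ R, coroot (-α) = -coroot α
  pos_or_neg : ∀ α ∈ R, (α ∈ Rpos ∧ -α ∉ Rpos) ∨ (-α ∈ Rpos ∧ α ∉ Rpos)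
  reflect_mem : ∀ α ∈ R, ∀ β ∈ R, β - coroot α β • α ∈ R
  coroot_int : ∀ α ∈ R, ∀ β ∈ R, ∃ m : ℤ, coroot α β = (m : ℚ)
  reduced : ∀ α ∈ R, (2 : ℚ) • α ∉ R
  pos_comb : ∀ α ∈ Rpos, α ∈ AddSubmonoid.closure Δ
  simple_indep : LinearIndependent ℚ (fun a : Δ => (a : V))
  irreducible : ∀ Δ₁ Δ₂ : Set V, Δ₁ ∪ Δ₂ = Δ → Δ₁.Nonempty → Δ₂.Nonempty →
    (∀ a ∈ Δ₁, ∀ b ∈ Δ₂, coroot a b = 0) → False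
  highest_mem : highest ∈ Rpos
  highest_prop : ∀ α ∈ Rpos, highest - α ∈ AddSubmonoid.closure Δ

/-- The affine reflection `s_{α,n}` on `V*`: `v ↦ v - (⟨α,v⟩ - n) α^∨`. -/
def sAff (α : V) (cα : Module.Dual ℚ V) (n : ℤ) (v : Module.Dual ℚ V) : Module.Dual ℚ V :=
  v - (v α - n) • cα

/-- Negative half space `H⁻_{α,n}`. -/
def Hm (α : V) (n : ℤ) : Set (Module.Dual ℚ V) := {v | v α < (n : ℚ)}

/-- Positive half space `H⁺_{α,n}`. -/
def Hp (α : V) (n : ℤ) : Set (Module.Dual ℚ V) := {v | (n : ℚ) < v α}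

/-- Hyperplane `H_{α,n}`. -/
def Hyp (α : V) (n : ℤ) : Set (Module.Dual ℚ V) := {v | v α = (n : ℚ)}

/-- Alcoves: nonempty open intersections of strips between consecutive root hyperplanes. -/
def IsAlcove (P : RootSystemData V) (A : Set (Module.Dual ℚ V)) : Prop :=
  A.Nonempty ∧ ∃ d : V → ℤ,
    A = {v | ∀ α ∈ P.Rpos, (d α : ℚ) < v α ∧ v α < (d α : ℚ) + 1}

/-- The minimal `m` with `A ⊆ H⁻_{β,m}`. -/
noncomputable def upIdx (β : V) (A : Set (Module.Dual ℚ V)) : ℤ := sInf {m : ℤ | A ⊆ Hm β m}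

/-- The maximal `m` with `A ⊆ H⁺_{β,m}`. -/
noncomputable def downIdx (β : V) (A : Set (Module.Dual ℚ V)) : ℤ := sSup {m : ℤ | A ⊆ Hp β m}

/-- The operation `β↑` on alcoves. -/
noncomputable def up (P : RootSystemData V) (β : V) (A : Set (Module.Dual ℚ V)) :
    Set (Module.Dual ℚ V) := sAff β (P.coroot β) (upIdx β A) '' A

/-- The operation `β↓` on alcoves. -/
noncomputable def down (P : RootSystemData V) (β : V) (A : Set (Module.Dual ℚ V)) :
    Set (Module.Dual ℚ V) := sAff β (P.coroot β) (downIdx β A) '' A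

/-- Contragredient action of a linear automorphism of `V` on `V*`. -/
def dualAct (w : V ≃ₗ[ℚ] V) (v : Module.Dual ℚ V) : Module.Dual ℚ V :=
  v ∘ₗ (w.symm : V →ₗ[ℚ] V)

/-- Generators of the finite Weyl group: the simple reflections on `V`. -/
def weylGens (P : RootSystemData V) : Set (V ≃ₗ[ℚ] V) :=
  {e | ∃ α ∈ P.Δ, ∀ x, e x = x - P.coroot α x • α}

/-- The finite Weyl group. -/
def Weyl (P : RootSystemData V) : Subgroup (V ≃ₗ[ℚ] V) := Subgroup.closure (weylGens P)

-- `w(β)⁺`: the positive root among `±w(β)`.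
open scoped Classical in
noncomputable def wplus (P : RootSystemData V) (w : V ≃ₗ[ℚ] V) (β : V) : V :=
  if w β ∈ P.Rpos then w β else -(w β)

/-- Generators of the affine Weyl group: the simple affine reflections on `V*`. -/
def affGens (P : RootSystemData V) : Set (Equiv.Perm (Module.Dual ℚ V)) :=
  {e | (∃ α ∈ P.Δ, ∀ v, e v = sAff α (P.coroot α) 0 v) ∨
       (∀ v, e v = sAff P.highest (P.coroot P.highest) 1 v)}

/-- The affine Weyl group, acting on `V*`. -/
def AffWeyl (P : RootSystemData V) : Subgroup (Equiv.Perm (Module.Dual ℚ V)) :=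
  Subgroup.closure (affGens P)

/-- The fundamental alcove `A_e`. -/
def Ae (P : RootSystemData V) : Set (Module.Dual ℚ V) :=
  {v | ∀ α ∈ P.Rpos, 0 < v α ∧ v α < 1}

/-- The alcoves `A_x`, `x ∈ W` (finite Weyl group). -/
def finAlc (P : RootSystemData V) : Set (Set (Module.Dual ℚ V)) :=
  {S | ∃ w ∈ Weyl P, S = dualAct w '' Ae P}

/-- `𝒜⁻_β`: finite-Weyl alcoves contained in `H⁻_{β,0}`. -/
def Aminus (P : RootSystemData V) (β : V) : Set (Set (Module.Dual ℚ V)) :=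
  {S | S ∈ finAlc P ∧ S ⊆ Hm β 0}

end Preliminaries

/-- The `α`-string through an alcove `A`: all `α↑ⁿ A`, `n ∈ ℤ`. -/
def Astring {V : Type*} [AddCommGroup V] [Module ℚ V] (P : RootSystemData V)
    (α : V) (A : Set (Module.Dual ℚ V)) : Set (Set (Module.Dual ℚ V)) :=
  {S | ∃ n : ℕ, S = (up P α)^[n] A ∨ S = (down P α)^[n] A}

namespace Stmt18Aux
open Module
variable {V : Type*} [AddCommGroup V] [Module ℚ V] (P : RootSystemData V)

lemma root_ne_zero {β : V} (hβ : β ∈ P.R) : β ≠ 0 := by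
  intro h
  have := P.coroot_self β hβ
  rw [h, map_zero] at this
  norm_num at this

lemma prop_roots {a β : V} (ha : a ∈ P.R) (hβ : β ∈ P.R) {t : ℚ} (h : β = t • a) :
    t = 1 ∨ t = -1 := by
  have ht0 : t ≠ 0 := by
    rintro rfl; exact root_ne_zero P hβ (by simp [h])
  obtain ⟨m, hm⟩ := P.coroot_int a ha β hβ
  obtain ⟨l, hl⟩ := P.coroot_int β hβ a ha
  have hm' : (m : ℚ) = 2 * t := by
    rw [← hm, h, map_smul, P.coroot_self a ha, smul_eq_mul]; ring
  have hl' : t * l = 2 := by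
    have h2 := P.coroot_self β hβ
    nth_rewrite 2 [h] at h2
    rw [map_smul, hl, smul_eq_mul] at h2
    exact h2
  have h4 : m * l = 4 := by
    have : ((m : ℚ)) * ((l : ℚ)) = 4 := by rw [hm']; nlinarith [hl']
    exact_mod_cast this
  have hdvd : m ∣ 4 := ⟨l, h4.symm⟩
  have hub : m ≤ 4 := Int.le_of_dvd (by norm_num) hdvd
  have hlb : -4 ≤ m := by
    have : -m ≤ 4 := Int.le_of_dvd (by norm_num) ((neg_dvd).mpr hdvd)
    omega
  have h2a : ((2:ℚ) • a) ∈ P.R → False := P.reduced a ha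
  have h2na : ((2:ℚ) • (-a)) ∈ P.R → False := P.reduced (-a) (P.neg_mem a ha)
  have h2b : ((2:ℚ) • β) ∈ P.R → False := P.reduced β hβ
  have h2nb : ((2:ℚ) • (-β)) ∈ P.R → False := P.reduced (-β) (P.neg_mem β hβ)
  interval_cases m <;> push_cast at hm' h4 <;> [skip; omega; skip; skip; skip; skip; skip; omega; skip]
  · -- t = -2
    exfalso
    apply h2na
    have : ((2:ℚ) • (-a)) = β := by rw [h, smul_neg, ← neg_smul]; congr 1; linarith
    rw [this]; exact hβ
  · -- t = -1
    right; linarith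
  · -- t = -1/2 : a = 2 • (-β)
    exfalso
    apply h2nb
    have : ((2:ℚ) • (-β)) = a := by
      rw [h, smul_neg, smul_smul]
      have : t = -(1/2) := by linarith
      rw [this]; norm_num
    rw [this]; exact ha
  · -- m = 0
    exfalso; exact ht0 (by linarith)
  · -- t = 1/2 : a = 2 • β
    exfalso
    apply h2b
    have : ((2:ℚ) • β) = a := by
      rw [h, smul_smul]
      have : t = 1/2 := by linarith
      rw [this]; norm_num
    rw [this]; exact ha
  · left; linarith
  · -- t = 2
    exfalso
    apply h2a
    have : ((2:ℚ) • a) = β := by rw [h]; congr 1; linarith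
    rw [this]; exact hβ

lemma pair_indep {a α : V} (ha : a ∈ P.R) (hα : α ∈ P.R) (h1 : α ≠ a) (h2 : α ≠ -a)
    {x y x' y' : ℚ} (h : x • α + y • a = x' • α + y' • a) : x = x' ∧ y = y' := by
  have hα0 := root_ne_zero P hα
  have ha0 := root_ne_zero P ha
  have hxx : x = x' := by
    by_contra hne
    have hx : x - x' ≠ 0 := sub_ne_zero.mpr hne
    have hst : (x - x') • α = (y' - y) • a := by
      have h0 : x • α - x' • α = y' • a - y • a := by
        rw [← sub_eq_zero] at h ⊢; rw [← h]; abel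
      rw [← sub_smul, ← sub_smul] at h0; exact h0
    have h' : α = ((y' - y) * (x - x')⁻¹) • a := by
      have : α = (x - x')⁻¹ • ((x - x') • α) := by
        rw [smul_smul, inv_mul_cancel₀ hx, one_smul]
      rw [this, hst, smul_smul]; ring_nf
    rcases prop_roots P ha hα h' with ht | ht
    · rw [ht, one_smul] at h'; exact h1 h'
    · rw [ht, neg_smul, one_smul] at h'; exact h2 h'
  refine ⟨hxx, ?_⟩
  have hz : (y - y') • a = 0 := by
    rw [sub_smul, sub_eq_zero]
    have h' := h; rw [hxx] at h'
    exact add_left_cancel h'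
  rcases smul_eq_zero.mp hz with h0 | h0
  · have := sub_eq_zero.mp h0; linarith
  · exact absurd h0 ha0

lemma coroot_unique {α : V} (hne : α ≠ 0) (f g : Module.Dual ℚ V)
    (hf2 : f α = 2) (hg2 : g α = 2)
    (hfR : ∀ β ∈ P.R, β - f β • α ∈ P.R) (hgR : ∀ β ∈ P.R, β - g β • α ∈ P.R)
    {β : V} (hβ : β ∈ P.R) : f β = g β := by
  by_contra hd
  set d : ℚ := g β - f β with hdd
  have hd0 : d ≠ 0 := sub_ne_zero.mpr (Ne.symm hd)
  set u : V → V := fun x => x + (g x - f x) • α with hu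
  have huR : ∀ x ∈ P.R, u x ∈ P.R := by
    intro x hx
    have h1 : x - g x • α ∈ P.R := hgR x hx
    have h2 := hfR _ h1
    have heq : (x - g x • α) - f (x - g x • α) • α = u x := by
      have hfx : f (x - g x • α) = f x - g x * 2 := by
        rw [map_sub, map_smul, hf2, smul_eq_mul]
      rw [hfx, hu]
      simp only [sub_smul, mul_smul, smul_eq_mul]
      module
    rwa [heq] at h2
  have hiter : ∀ n : ℕ, u^[n] β = β + ((n : ℚ) * d) • α ∧ u^[n] β ∈ P.R := by
    intro n
    induction n with
    | zero => simpa using hβ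
    | succ n ih =>
      obtain ⟨h1, h2⟩ := ih
      constructor
      · rw [Function.iterate_succ_apply', h1, hu]
        have key : g (β + ((n:ℚ) * d) • α) - f (β + ((n:ℚ) * d) • α) = d := by
          simp only [map_add, map_smul, smul_eq_mul]
          rw [hf2, hg2, hdd]; ring
        simp only
        rw [key]
        push_cast
        module
      · rw [Function.iterate_succ_apply']
        exact huR _ h2
  have hinj : Function.Injective (fun n : ℕ => u^[n] β) := by
    intro n m hnm
    simp only at hnm
    rw [(hiter n).1, (hiter m).1] at hnm
    have h1 : ((n : ℚ) * d) • α = ((m : ℚ) * d) • α := add_left_cancel hnm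
    have h2 : ((n : ℚ) * d - (m : ℚ) * d) • α = 0 := by rw [sub_smul, h1, sub_self]
    rcases smul_eq_zero.mp h2 with h0 | h0
    · have h3 : ((n:ℚ) - m) * d = 0 := by rw [← h0]; ring
      rcases mul_eq_zero.mp h3 with h4 | h4
      · have : (n : ℚ) = m := by linarith [sub_eq_zero.mp h4]
        exact_mod_cast this
      · exact absurd h4 hd0
    · exact absurd h0 hne
  exact Set.infinite_of_injective_forall_mem hinj (fun n => (hiter n).2) P.finite_R

lemma sign_lemma {α a : V} (hα : α ∈ P.R) (ha : a ∈ P.R) (h1 : α ≠ a) (h2 : α ≠ -a)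
    (hp : 0 < P.coroot α a) : 0 < P.coroot a α := by
  by_contra hq
  push_neg at hq
  set p : ℚ := P.coroot α a with hpdef
  set q : ℚ := P.coroot a α with hqdef
  have hp1 : 1 ≤ p := by
    obtain ⟨m, hm⟩ := P.coroot_int α hα a ha
    rw [hpdef, hm] at hp ⊢
    exact_mod_cast (by exact_mod_cast hp : (0:ℤ) < m)
  set sa : V → V := fun z => z - P.coroot a z • a with hsa
  set sA : V → V := fun z => z - P.coroot α z • α with hsA
  set u : V → V := fun x => sA (sa x) with hu
  have huR : ∀ x ∈ P.R, u x ∈ P.R := fun x hx =>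
    P.reflect_mem α hα _ (P.reflect_mem a ha x hx)
  have hustep : ∀ x y : ℚ, u (x • α + y • a) =
      ((p * q - 1) * x + p * y) • α + (-(q * x) - y) • a := by
    intro x y
    have c1 : P.coroot a (x • α + y • a) = q * x + 2 * y := by
      simp only [map_add, map_smul, smul_eq_mul]
      rw [P.coroot_self a ha, ← hqdef]; ring
    have e1 : sa (x • α + y • a) = x • α + (-(q * x) - y) • a := by
      simp only [hsa]; rw [c1]; module
    have c2 : P.coroot α (x • α + (-(q * x) - y) • a) = 2 * x + (-(q * x) - y) * p := by
      simp only [map_add, map_smul, smul_eq_mul]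
      rw [P.coroot_self α hα, ← hpdef]; ring
    have e2 : sA (x • α + (-(q * x) - y) • a) =
        ((p * q - 1) * x + p * y) • α + (-(q * x) - y) • a := by
      simp only [hsA]; rw [c2]; module
    simp only [hu]; rw [e1, e2]
  -- signed coefficient sequence
  set G : ℚ × ℚ → ℚ × ℚ := fun s => ((1 - p * q) * s.1 - p * s.2, q * s.1 + s.2) with hG
  set zw : ℕ → ℚ × ℚ := fun n => G^[n] (0, -1) with hzw
  have hzw_succ : ∀ n, zw (n + 1) = G (zw n) := by
    intro n; simp only [hzw]; rw [Function.iterate_succ_apply']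
  have horbit : ∀ n : ℕ, u^[n] a =
      ((-1:ℚ)^(n+1) * (zw n).1) • α + ((-1:ℚ)^(n+1) * (zw n).2) • a := by
    intro n
    induction n with
    | zero => simp [hzw]
    | succ n ih =>
      rw [Function.iterate_succ_apply', ih, hustep, hzw_succ, hG]
      simp only
      congr 1
      · congr 1
        rw [pow_succ]
        ring
      · congr 1
        rw [pow_succ]
        ring
  have hinv : ∀ n : ℕ, 0 ≤ (zw n).1 ∧ (zw n).2 ≤ -1 := by
    intro n
    induction n with
    | zero => simp [hzw]
    | succ n ih =>
      obtain ⟨hz, hw⟩ := ih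
      rw [hzw_succ, hG]
      have prod1 : 0 ≤ p * (-q) := mul_nonneg (le_of_lt hp) (by linarith)
      have prod2 : 0 ≤ (1 - p * q) * (zw n).1 := mul_nonneg (by nlinarith) hz
      have prod3 : p * (zw n).2 ≤ p * (-1) := mul_le_mul_of_nonneg_left hw (le_of_lt hp)
      have prod4 : q * (zw n).1 ≤ 0 := mul_nonpos_of_nonpos_of_nonneg hq hz
      constructor
      · show 0 ≤ (1 - p * q) * (zw n).1 - p * (zw n).2
        nlinarith
      · show q * (zw n).1 + (zw n).2 ≤ -1
        linarith
  have hstep : ∀ n : ℕ, (zw n).1 + 1 ≤ (zw (n+1)).1 := by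
    intro n
    obtain ⟨hz, hw⟩ := hinv n
    rw [hzw_succ, hG]
    have prod1 : 0 ≤ p * (-q) := mul_nonneg (le_of_lt hp) (by linarith)
    have prod3 : p * (zw n).2 ≤ p * (-1) := mul_le_mul_of_nonneg_left hw (le_of_lt hp)
    have prod5 : 0 ≤ (-(p * q)) * (zw n).1 := mul_nonneg (by nlinarith) hz
    show (zw n).1 + 1 ≤ (1 - p * q) * (zw n).1 - p * (zw n).2
    nlinarith
  have hmono : StrictMono (fun n => (zw n).1) := by
    apply strictMono_nat_of_lt_succ
    intro n
    have := hstep n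
    show (zw n).1 < (zw (n+1)).1
    linarith
  have hinj : Function.Injective (fun n : ℕ => u^[n] a) := by
    intro n m hnm
    simp only at hnm
    rw [horbit n, horbit m] at hnm
    have hx := (pair_indep P ha hα h1 h2 hnm).1
    have hzn : (zw n).1 = (zw m).1 := by
      have h1 : |(-1:ℚ)^(n+1) * (zw n).1| = |(-1:ℚ)^(m+1) * (zw m).1| := by rw [hx]
      rw [abs_mul, abs_mul] at h1
      simp only [abs_pow, abs_neg, abs_one, one_pow, one_mul] at h1
      rw [abs_of_nonneg (hinv n).1, abs_of_nonneg (hinv m).1] at h1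
      exact h1
    exact hmono.injective hzn
  have hmem : ∀ n : ℕ, u^[n] a ∈ P.R := by
    intro n
    induction n with
    | zero => simpa using ha
    | succ n ih => rw [Function.iterate_succ_apply']; exact huR _ ih
  exact Set.infinite_of_injective_forall_mem hinj hmem P.finite_R


end Stmt18Aux
namespace Stmt18Aux
open Module
variable {V : Type*} [AddCommGroup V] [Module ℚ V] (P : RootSystemData V)

lemma rep_finsupp : ∀ m : Multiset V, (∀ c ∈ m, c ∈ P.Δ) →
    ∃ l : P.Δ →₀ ℚ, (∀ i, 0 ≤ l i) ∧
      Finsupp.linearCombination ℚ (fun a : P.Δ => (a : V)) l = m.sum := by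
  classical
  intro m
  induction m using Multiset.induction_on with
  | empty => exact fun _ => ⟨0, fun i => le_refl 0, by simp⟩
  | cons c s ih =>
    intro hm
    obtain ⟨l, hl1, hl2⟩ := ih (fun x hx => hm x (Multiset.mem_cons_of_mem hx))
    have hc : c ∈ P.Δ := hm c (Multiset.mem_cons_self c s)
    refine ⟨l + Finsupp.single ⟨c, hc⟩ 1, ?_, ?_⟩
    · intro i
      rw [Finsupp.add_apply]
      have h0 : (0:ℚ) ≤ Finsupp.single (⟨c, hc⟩ : P.Δ) 1 i := by
        rw [Finsupp.single_apply]; split <;> norm_num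
      linarith [hl1 i]
    · rw [map_add, hl2, Finsupp.linearCombination_single, Multiset.sum_cons, one_smul]
      abel

lemma lc_inj {l₁ l₂ : P.Δ →₀ ℚ}
    (h : Finsupp.linearCombination ℚ (fun a : P.Δ => (a : V)) l₁ =
         Finsupp.linearCombination ℚ (fun a : P.Δ => (a : V)) l₂) : l₁ = l₂ := by
  have h0 : Finsupp.linearCombination ℚ (fun a : P.Δ => (a : V)) (l₁ - l₂) = 0 := by
    rw [map_sub, h, sub_self]
  have := linearIndependent_iff.mp P.simple_indep _ h0
  exact sub_eq_zero.mp this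

lemma simple_reflect_pos {a : V} (ha : a ∈ P.Δ) {β : V} (hβ : β ∈ P.Rpos) (hne : β ≠ a) :
    β - P.coroot a β • a ∈ P.Rpos := by
  classical
  have haR : a ∈ P.R := P.pos_subset (P.simple_subset ha)
  have hβR := P.pos_subset hβ
  have hγR : β - P.coroot a β • a ∈ P.R := P.reflect_mem a haR β hβR
  by_contra hγ
  have hnγ : -(β - P.coroot a β • a) ∈ P.Rpos := by
    rcases P.pos_or_neg _ hγR with ⟨h, _⟩ | ⟨h, _⟩
    · exact absurd h hγ
    · exact h
  obtain ⟨m₁, hm₁, hs₁⟩ := AddSubmonoid.exists_multiset_of_mem_closure (P.pos_comb β hβ)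
  obtain ⟨m₂, hm₂, hs₂⟩ := AddSubmonoid.exists_multiset_of_mem_closure (P.pos_comb _ hnγ)
  obtain ⟨l₁, hl₁, hc₁⟩ := rep_finsupp P m₁ hm₁
  obtain ⟨l₂, hl₂, hc₂⟩ := rep_finsupp P m₂ hm₂
  rw [hs₁] at hc₁
  rw [hs₂] at hc₂
  have key : l₁ + l₂ = Finsupp.single ⟨a, ha⟩ (P.coroot a β) := by
    apply lc_inj P
    rw [map_add, hc₁, hc₂, Finsupp.linearCombination_single]
    simp only
    module
  have hcoord : ∀ i : P.Δ, i ≠ ⟨a, ha⟩ → l₁ i = 0 := by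
    intro i hi
    have := congrArg (fun f => f i) key
    simp only [Finsupp.add_apply, Finsupp.single_apply] at this
    rw [if_neg (by exact fun h => hi h.symm)] at this
    linarith [hl₁ i, hl₂ i]
  have hβa : β = (l₁ ⟨a, ha⟩) • a := by
    have hl1s : l₁ = Finsupp.single ⟨a, ha⟩ (l₁ ⟨a, ha⟩) := by
      ext i
      by_cases hi : i = ⟨a, ha⟩
      · subst hi; rw [Finsupp.single_apply, if_pos rfl]
      · rw [Finsupp.single_apply, if_neg (by exact fun h => hi h.symm)]
        exact hcoord i hi
    rw [← hc₁, hl1s, Finsupp.linearCombination_single]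
    simp
  rcases prop_roots P haR hβR hβa with ht | ht
  · rw [ht, one_smul] at hβa; exact hne hβa
  · rw [ht, neg_smul, one_smul] at hβa
    rcases P.pos_or_neg a haR with ⟨_, hna⟩ | ⟨_, hpa⟩
    · rw [hβa] at hβ; exact hna hβ
    · exact hpa (P.simple_subset ha)

open scoped Classical in
noncomputable def htf : V →ₗ[ℚ] ℚ :=
  (Basis.extend P.simple_indep).constr ℚ
    (fun i => if (i : V) ∈ P.Δ then (1 : ℚ) else 0)

lemma htf_simple {a : V} (ha : a ∈ P.Δ) : htf P a = 1 := by
  classical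
  have hmem : a ∈ LinearIndepOn.extend (K := ℚ) (v := id) P.simple_indep (Set.subset_univ P.Δ) :=
    LinearIndepOn.subset_extend (K := ℚ) (v := id) P.simple_indep _ ha
  have h1 : ((Module.Basis.extend P.simple_indep) ⟨a, hmem⟩ : V) = a :=
    Module.Basis.extend_apply_self _ _
  have h2 := (Module.Basis.extend P.simple_indep).constr_basis ℚ
    (fun i => if (i : V) ∈ P.Δ then (1 : ℚ) else 0) ⟨a, hmem⟩
  rw [htf, ← h1]
  rw [h2]
  simp [ha]

lemma htf_multiset : ∀ m : Multiset V, (∀ c ∈ m, c ∈ P.Δ) → htf P m.sum = m.card := by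
  intro m
  induction m using Multiset.induction_on with
  | empty => intro _; simp
  | cons c s ih =>
    intro hm
    rw [Multiset.sum_cons, map_add, ih (fun x hx => hm x (Multiset.mem_cons_of_mem hx)),
      htf_simple P (hm c (Multiset.mem_cons_self c s)), Multiset.card_cons]
    push_cast; ring

lemma htf_nat {β : V} (hβ : β ∈ P.Rpos) : ∃ k : ℕ, 1 ≤ k ∧ htf P β = k := by
  obtain ⟨m, hm, hs⟩ := AddSubmonoid.exists_multiset_of_mem_closure (P.pos_comb β hβ)
  refine ⟨m.card, ?_, by rw [← hs]; exact htf_multiset P m hm⟩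
  rcases Multiset.empty_or_exists_mem m with h | h
  · exfalso
    apply root_ne_zero P (P.pos_subset hβ)
    rw [← hs, h, Multiset.sum_zero]
  · obtain ⟨c, hc⟩ := h
    exact Multiset.card_pos.mpr (by rintro rfl; simp at hc)

end Stmt18Aux
namespace Stmt18Aux
open Module
variable {V : Type*} [AddCommGroup V] [Module ℚ V] (P : RootSystemData V)

/-- The reflection in a root as a linear map. -/
noncomputable def genMap (α : V) : V →ₗ[ℚ] V := LinearMap.id - (P.coroot α).smulRight α

lemma genMap_apply (α x : V) : genMap P α x = x - P.coroot α x • α := rfl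

lemma genMap_invol {α : V} (hα : α ∈ P.R) (x : V) : genMap P α (genMap P α x) = x := by
  simp only [genMap_apply, map_sub, map_smul, P.coroot_self α hα, smul_eq_mul]
  module

/-- The reflection in a root as a linear equivalence. -/
noncomputable def genEquiv (α : V) (hα : α ∈ P.R) : V ≃ₗ[ℚ] V :=
  LinearEquiv.ofLinear (genMap P α) (genMap P α)
    (LinearMap.ext fun x => genMap_invol P hα x)
    (LinearMap.ext fun x => genMap_invol P hα x)

lemma genEquiv_apply {α : V} (hα : α ∈ P.R) (x : V) :
    genEquiv P α hα x = x - P.coroot α x • α := rfl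

lemma genEquiv_mem {a : V} (ha : a ∈ P.Δ) :
    genEquiv P a (P.pos_subset (P.simple_subset ha)) ∈ Weyl P :=
  Subgroup.subset_closure ⟨a, ha, fun _ => rfl⟩

lemma weyl_maps_R {w : V ≃ₗ[ℚ] V} (hw : w ∈ Weyl P) :
    (∀ β ∈ P.R, w β ∈ P.R) ∧ (∀ β ∈ P.R, w.symm β ∈ P.R) := by
  induction hw using Subgroup.closure_induction with
  | mem x hx =>
    obtain ⟨a, ha, hxa⟩ := hx
    have haR : a ∈ P.R := P.pos_subset (P.simple_subset ha)
    have hmaps : ∀ β ∈ P.R, x β ∈ P.R := by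
      intro β hβ; rw [hxa β]; exact P.reflect_mem a haR β hβ
    have hinvol : ∀ v, x (x v) = v := by
      intro v
      rw [hxa, hxa]
      simp only [map_sub, map_smul, P.coroot_self a haR, smul_eq_mul]
      module
    refine ⟨hmaps, fun β hβ => ?_⟩
    have : x.symm β = x β := by
      conv_lhs => rw [← hinvol β]
      rw [LinearEquiv.symm_apply_apply]
    rw [this]; exact hmaps β hβ
  | one => exact ⟨fun β hβ => hβ, fun β hβ => hβ⟩
  | mul x y _ _ ihx ihy =>
    exact ⟨fun β hβ => ihx.1 _ (ihy.1 β hβ), fun β hβ => ihy.2 _ (ihx.2 β hβ)⟩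
  | inv x _ ih => exact ⟨ih.2, ih.1⟩

theorem exists_weyl_reflect {α : V} (hα : α ∈ P.Rpos) :
    ∃ u ∈ Weyl P, ∀ β ∈ P.R, u β = β - P.coroot α β • α := by
  suffices h : ∀ k : ℕ, ∀ α, α ∈ P.Rpos → htf P α ≤ (k : ℚ) →
      ∃ u ∈ Weyl P, ∀ β ∈ P.R, u β = β - P.coroot α β • α by
    obtain ⟨k, _, hk2⟩ := htf_nat P hα
    exact h k α hα (le_of_eq hk2)
  intro k
  induction k with
  | zero =>
    intro α hαpos hle
    obtain ⟨k', h1, h2⟩ := htf_nat P hαpos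
    rw [h2] at hle
    exfalso
    have : (1:ℚ) ≤ (k' : ℚ) := by exact_mod_cast h1
    norm_num at hle
    linarith
  | succ k ih =>
    intro α hαpos hle
    have hαR : α ∈ P.R := P.pos_subset hαpos
    by_cases hΔ : α ∈ P.Δ
    · exact ⟨genEquiv P α hαR, genEquiv_mem P hΔ, fun β _ => rfl⟩
    · -- find a simple root pairing positively with α
      obtain ⟨m, hm, hs⟩ := AddSubmonoid.exists_multiset_of_mem_closure (P.pos_comb α hαpos)
      have hsum : (m.map (fun c => P.coroot α c)).sum = 2 := by
        have := map_multiset_sum (P.coroot α) m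
        rw [hs] at this
        rw [← this, P.coroot_self α hαR]
      have hex : ∃ a ∈ m, 0 < P.coroot α a := by
        by_contra hno
        push_neg at hno
        have h1 : (0:ℚ) ≤ (m.map (fun c => -(P.coroot α c))).sum :=
          Multiset.sum_nonneg (by
            intro x hx
            obtain ⟨c, hc, rfl⟩ := Multiset.mem_map.mp hx
            linarith [hno c hc])
        have hmm : (m.map fun c => -(P.coroot α c)) = (m.map (fun c => P.coroot α c)).map Neg.neg := by
          rw [Multiset.map_map]; rfl
        rw [hmm, Multiset.sum_map_neg', hsum] at h1
        norm_num at h1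
      obtain ⟨a, ham, hpa⟩ := hex
      have haΔ : a ∈ P.Δ := hm a ham
      have haR : a ∈ P.R := P.pos_subset (P.simple_subset haΔ)
      have hane : α ≠ a := fun h => hΔ (h ▸ haΔ)
      have hane' : α ≠ -a := by
        intro h
        rcases P.pos_or_neg α hαR with ⟨_, hnα⟩ | ⟨_, hnα⟩
        · apply hnα
          rw [h, neg_neg]
          exact P.simple_subset haΔ
        · exact hnα hαpos
      have hq : 0 < P.coroot a α := sign_lemma P hαR haR hane hane' hpa
      have hq1 : 1 ≤ P.coroot a α := by
        obtain ⟨mz, hmz⟩ := P.coroot_int a haR α hαR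
        rw [hmz] at hq ⊢
        exact_mod_cast (by exact_mod_cast hq : (0:ℤ) < mz)
      set α' : V := α - P.coroot a α • a with hα'def
      have hα'pos : α' ∈ P.Rpos := simple_reflect_pos P haΔ hαpos hane
      have hα'R : α' ∈ P.R := P.pos_subset hα'pos
      have hht : htf P α' = htf P α - P.coroot a α := by
        rw [hα'def, map_sub, map_smul, htf_simple P haΔ, smul_eq_mul, mul_one]
      have hle' : htf P α' ≤ (k : ℚ) := by
        rw [hht]
        push_cast at hle
        linarith
      obtain ⟨u', hu'W, hu'⟩ := ih α' hα'pos hle'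
      set e := genEquiv P a haR with hedef
      refine ⟨e * u' * e, ?_, ?_⟩
      · exact mul_mem (mul_mem (genEquiv_mem P haΔ) hu'W) (genEquiv_mem P haΔ)
      · intro β hβ
        have heβ : e β ∈ P.R := P.reflect_mem a haR β hβ
        have hee : ∀ x, e (e x) = x := fun x => genMap_invol P haR x
        have heα' : e α' = α := by
          rw [hα'def]
          have : α - P.coroot a α • a = e α := rfl
          rw [this, hee]
        -- the two candidate coroot functionals agree on R
        have hkey : P.coroot α β = ((P.coroot α').comp (genMap P a)) β := by
          apply coroot_unique P (root_ne_zero P hαR) (P.coroot α)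
            ((P.coroot α').comp (genMap P a)) (P.coroot_self α hαR) ?_ ?_ ?_ hβ
          · rw [LinearMap.comp_apply]
            have : genMap P a α = α' := rfl
            rw [this]
            exact P.coroot_self α' hα'R
          · exact P.reflect_mem α hαR
          · intro γ hγ
            rw [LinearMap.comp_apply]
            have hgm : genMap P a γ = e γ := rfl
            have heγ : e γ ∈ P.R := P.reflect_mem a haR γ hγ
            have hmid : e γ - P.coroot α' (e γ) • α' ∈ P.R :=
              P.reflect_mem α' hα'R _ heγ
            have hfin : e (e γ - P.coroot α' (e γ) • α') ∈ P.R := by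
              have : e (e γ - P.coroot α' (e γ) • α') =
                  (e γ - P.coroot α' (e γ) • α') - P.coroot a (e γ - P.coroot α' (e γ) • α') • a := rfl
              rw [this]
              exact P.reflect_mem a haR _ hmid
            have heq : e (e γ - P.coroot α' (e γ) • α') = γ - P.coroot α' (e γ) • α := by
              rw [map_sub, map_smul, hee, heα']
            show γ - P.coroot α' (e γ) • α ∈ P.R
            rw [← heq]
            exact hfin
        show e (u' (e β)) = β - P.coroot α β • α
        rw [hu' (e β) heβ, map_sub, map_smul, hee, heα', hkey]
        rfl

end Stmt18Aux
namespace Stmt18Aux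
open Module
variable {V : Type*} [AddCommGroup V] [Module ℚ V] (P : RootSystemData V)

lemma dualAct_apply (w : V ≃ₗ[ℚ] V) (v : Module.Dual ℚ V) (x : V) :
    dualAct w v x = v (w.symm x) := rfl

lemma mem_dualAct_Ae_iff (w : V ≃ₗ[ℚ] V) (v : Module.Dual ℚ V) :
    v ∈ dualAct w '' Ae P ↔ ∀ γ ∈ P.Rpos, 0 < v (w γ) ∧ v (w γ) < 1 := by
  constructor
  · rintro ⟨u, hu, rfl⟩ γ hγ
    have h : dualAct w u (w γ) = u γ := by
      rw [dualAct_apply, LinearEquiv.symm_apply_apply]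
    rw [h]; exact hu γ hγ
  · intro h
    refine ⟨dualAct w.symm v, ?_, ?_⟩
    · intro γ hγ
      have h2 : dualAct w.symm v γ = v (w γ) := by
        rw [dualAct_apply, LinearEquiv.symm_symm]
      rw [h2]; exact h γ hγ
    · apply LinearMap.ext; intro x
      rw [dualAct_apply, dualAct_apply, LinearEquiv.symm_symm, LinearEquiv.apply_symm_apply]

lemma Ae_nonempty : (Ae P).Nonempty := by
  classical
  have hfin : P.Rpos.Finite := P.finite_R.subset P.pos_subset
  have hne : P.Rpos.Nonempty := ⟨P.highest, P.highest_mem⟩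
  have hFne : hfin.toFinset.Nonempty := by
    rwa [Set.Finite.toFinset_nonempty]
  set H : ℚ := hfin.toFinset.sup' hFne (fun β => htf P β) with hHdef
  have hH : ∀ β ∈ P.Rpos, htf P β ≤ H := fun β hβ =>
    Finset.le_sup' (f := fun β => htf P β) (hfin.mem_toFinset.mpr hβ)
  have hH1 : 1 ≤ H := by
    obtain ⟨k, hk1, hk2⟩ := htf_nat P P.highest_mem
    have : (1:ℚ) ≤ htf P P.highest := by rw [hk2]; exact_mod_cast hk1
    linarith [hH _ P.highest_mem]
  have hHpos : (0:ℚ) < H + 1 := by linarith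
  refine ⟨(H+1)⁻¹ • (htf P : V →ₗ[ℚ] ℚ), ?_⟩
  intro γ hγ
  obtain ⟨k, hk1, hk2⟩ := htf_nat P hγ
  have h1 : (1:ℚ) ≤ htf P γ := by rw [hk2]; exact_mod_cast hk1
  have happ : ((H+1)⁻¹ • (htf P : V →ₗ[ℚ] ℚ)) γ = htf P γ / (H+1) := by
    rw [LinearMap.smul_apply, smul_eq_mul, inv_mul_eq_div]
  rw [happ]
  constructor
  · apply div_pos (by linarith) hHpos
  · rw [div_lt_one hHpos]
    linarith [hH γ hγ]

/-- The strip between hyperplanes `d` and `d+1` in direction `α`. -/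
def Strip (α : V) (d : ℤ) : Set (Module.Dual ℚ V) :=
  {v | (d : ℚ) < v α ∧ v α < (d : ℚ) + 1}

lemma sAff_apply_self {α : V} (hα : α ∈ P.R) (n : ℤ) (v : Module.Dual ℚ V) :
    (sAff α (P.coroot α) n v) α = 2 * n - v α := by
  simp only [sAff, LinearMap.sub_apply, LinearMap.smul_apply, smul_eq_mul,
    P.coroot_self α hα]
  ring

lemma sAff0_invol {α : V} (hα : α ∈ P.R) (v : Module.Dual ℚ V) :
    sAff α (P.coroot α) 0 (sAff α (P.coroot α) 0 v) = v := by
  have h1 : (sAff α (P.coroot α) 0 v) α = - v α := by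
    rw [sAff_apply_self P hα]; push_cast; ring
  show sAff α (P.coroot α) 0 v - ((sAff α (P.coroot α) 0 v) α - ((0:ℤ):ℚ)) • P.coroot α = v
  rw [h1]
  show (v - (v α - ((0:ℤ):ℚ)) • P.coroot α) - (-v α - ((0:ℤ):ℚ)) • P.coroot α = v
  push_cast
  module

lemma sAff0_image_invol {α : V} (hα : α ∈ P.R) (S : Set (Module.Dual ℚ V)) :
    sAff α (P.coroot α) 0 '' (sAff α (P.coroot α) 0 '' S) = S := by
  ext v
  constructor
  · rintro ⟨v', ⟨v'', hv'', rfl⟩, rfl⟩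
    rwa [sAff0_invol P hα]
  · intro hv
    exact ⟨_, ⟨v, hv, rfl⟩, sAff0_invol P hα v⟩

lemma upIdx_strip {α : V} {S : Set (Module.Dual ℚ V)} {d : ℤ} (hne : S.Nonempty)
    (hS : S ⊆ Strip α d) : upIdx α S = d + 1 := by
  apply IsLeast.csInf_eq
  constructor
  · intro v hv
    have := (hS hv).2
    show v α < ((d+1 : ℤ) : ℚ)
    push_cast
    linarith
  · intro m hm
    obtain ⟨v, hv⟩ := hne
    have h1 : v α < (m:ℚ) := hm hv
    have h2 := (hS hv).1
    have h3 : (d:ℚ) < (m:ℚ) := lt_trans h2 h1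
    have : d < m := by exact_mod_cast h3
    omega

lemma downIdx_strip {α : V} {S : Set (Module.Dual ℚ V)} {d : ℤ} (hne : S.Nonempty)
    (hS : S ⊆ Strip α d) : downIdx α S = d := by
  apply IsGreatest.csSup_eq
  constructor
  · intro v hv
    exact (hS hv).1
  · intro m hm
    obtain ⟨v, hv⟩ := hne
    have h1 : (m:ℚ) < v α := hm hv
    have h2 := (hS hv).2
    have h3 : (m:ℚ) < (d:ℚ) + 1 := lt_trans h1 h2
    have : m < d + 1 := by exact_mod_cast h3
    omega

lemma up_strip {α : V} (hα : α ∈ P.R) {S : Set (Module.Dual ℚ V)} {d : ℤ}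
    (hne : S.Nonempty) (hS : S ⊆ Strip α d) :
    (up P α S).Nonempty ∧ up P α S ⊆ Strip α (d + 1) ∧
      up P α S = sAff α (P.coroot α) (d+1) '' S := by
  have hidx : upIdx α S = d + 1 := upIdx_strip hne hS
  have heq : up P α S = sAff α (P.coroot α) (d+1) '' S := by rw [up, hidx]
  refine ⟨?_, ?_, heq⟩
  · rw [heq]; exact hne.image _
  · rw [heq]
    rintro v ⟨v', hv', rfl⟩
    have h1 := (hS hv').1
    have h2 := (hS hv').2
    constructor
    · rw [sAff_apply_self P hα]; push_cast; linarith
    · rw [sAff_apply_self P hα]; push_cast; linarith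

lemma down_strip {α : V} (hα : α ∈ P.R) {S : Set (Module.Dual ℚ V)} {d : ℤ}
    (hne : S.Nonempty) (hS : S ⊆ Strip α d) :
    (down P α S).Nonempty ∧ down P α S ⊆ Strip α (d - 1) ∧
      down P α S = sAff α (P.coroot α) d '' S := by
  have hidx : downIdx α S = d := downIdx_strip hne hS
  have heq : down P α S = sAff α (P.coroot α) d '' S := by rw [down, hidx]
  refine ⟨?_, ?_, heq⟩
  · rw [heq]; exact hne.image _
  · rw [heq]
    rintro v ⟨v', hv', rfl⟩
    have h1 := (hS hv').1
    have h2 := (hS hv').2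
    constructor
    · rw [sAff_apply_self P hα]; push_cast; linarith
    · rw [sAff_apply_self P hα]; push_cast; linarith

lemma up_iter {α : V} (hα : α ∈ P.R) {S : Set (Module.Dual ℚ V)} {d : ℤ}
    (hne : S.Nonempty) (hS : S ⊆ Strip α d) (n : ℕ) :
    ((up P α)^[n] S).Nonempty ∧ (up P α)^[n] S ⊆ Strip α (d + n) := by
  induction n with
  | zero => simpa using ⟨hne, hS⟩
  | succ n ih =>
    obtain ⟨h1, h2⟩ := ih
    rw [Function.iterate_succ_apply']
    obtain ⟨g1, g2, _⟩ := up_strip P hα h1 h2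
    refine ⟨g1, ?_⟩
    have : d + (n:ℤ) + 1 = d + ((n+1 : ℕ) : ℤ) := by push_cast; ring
    rwa [this] at g2

lemma down_iter {α : V} (hα : α ∈ P.R) {S : Set (Module.Dual ℚ V)} {d : ℤ}
    (hne : S.Nonempty) (hS : S ⊆ Strip α d) (n : ℕ) :
    ((down P α)^[n] S).Nonempty ∧ (down P α)^[n] S ⊆ Strip α (d - n) := by
  induction n with
  | zero => simpa using ⟨hne, hS⟩
  | succ n ih =>
    obtain ⟨h1, h2⟩ := ih
    rw [Function.iterate_succ_apply']
    obtain ⟨g1, g2, _⟩ := down_strip P hα h1 h2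
    refine ⟨g1, ?_⟩
    have : d - (n:ℤ) - 1 = d - ((n+1 : ℕ) : ℤ) := by push_cast; ring
    rwa [this] at g2

lemma finAlc_strip {α : V} (hα : α ∈ P.Rpos) {S : Set (Module.Dual ℚ V)}
    (hS : S ∈ finAlc P) :
    S.Nonempty ∧ (S ⊆ Strip α (-1) ∨ S ⊆ Strip α 0) := by
  obtain ⟨w, hwW, rfl⟩ := hS
  have hαR : α ∈ P.R := P.pos_subset hα
  refine ⟨(Ae_nonempty P).image _, ?_⟩
  have hγR : w.symm α ∈ P.R := (weyl_maps_R P hwW).2 α hαR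
  rcases P.pos_or_neg _ hγR with ⟨hpos, _⟩ | ⟨hpos, _⟩
  · right
    intro v hv
    have := (mem_dualAct_Ae_iff P w v).mp hv _ hpos
    rw [LinearEquiv.apply_symm_apply] at this
    constructor
    · push_cast; linarith [this.1]
    · push_cast; linarith [this.2]
  · left
    intro v hv
    have := (mem_dualAct_Ae_iff P w v).mp hv _ hpos
    rw [map_neg, LinearEquiv.apply_symm_apply, map_neg] at this
    constructor
    · push_cast; linarith [this.2]
    · push_cast; linarith [this.1]

lemma strip_not_finAlc {α : V} (hα : α ∈ P.Rpos) {S : Set (Module.Dual ℚ V)} {d : ℤ}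
    (hne : S.Nonempty) (hS : S ⊆ Strip α d) (hd : 1 ≤ d ∨ d ≤ -2) : S ∉ finAlc P := by
  intro hfS
  obtain ⟨_, hstr⟩ := finAlc_strip P hα hfS
  obtain ⟨v, hv⟩ := hne
  have h1 := (hS hv).1
  have h2 := (hS hv).2
  have hlow : (-1 : ℚ) < v α := by
    rcases hstr with h | h
    · have := (h hv).1; push_cast at this; linarith
    · have := (h hv).1; push_cast at this; linarith
  have hhigh : v α < 1 := by
    rcases hstr with h | h
    · have := (h hv).2; push_cast at this; linarith
    · have := (h hv).2; push_cast at this; linarith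
  rcases hd with h | h
  · have : (1:ℚ) ≤ (d:ℚ) := by exact_mod_cast h
    linarith
  · have : (d:ℚ) ≤ -2 := by exact_mod_cast h
    linarith

lemma sAff0_image_finAlc {α : V} (hα : α ∈ P.Rpos) {S : Set (Module.Dual ℚ V)}
    (hS : S ∈ finAlc P) : sAff α (P.coroot α) 0 '' S ∈ finAlc P := by
  obtain ⟨w, hwW, rfl⟩ := hS
  have hαR : α ∈ P.R := P.pos_subset hα
  obtain ⟨u, huW, hu⟩ := exists_weyl_reflect P hα
  refine ⟨u * w, mul_mem huW hwW, ?_⟩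
  ext v
  have hiff : v ∈ sAff α (P.coroot α) 0 '' (dualAct w '' Ae P) ↔
      sAff α (P.coroot α) 0 v ∈ dualAct w '' Ae P := by
    constructor
    · rintro ⟨v', hv', rfl⟩
      rwa [sAff0_invol P hαR]
    · intro h
      exact ⟨_, h, sAff0_invol P hαR v⟩
  rw [hiff, mem_dualAct_Ae_iff, mem_dualAct_Ae_iff]
  apply forall_congr'
  intro γ
  apply imp_congr_right
  intro hγ
  have hwγR : w γ ∈ P.R := (weyl_maps_R P hwW).1 γ (P.pos_subset hγ)
  have key : (sAff α (P.coroot α) 0 v) (w γ) = v ((u * w) γ) := by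
    have h1 : (u * w) γ = u (w γ) := rfl
    rw [h1, hu (w γ) hwγR]
    simp only [sAff, LinearMap.sub_apply, LinearMap.smul_apply, smul_eq_mul,
      map_sub, map_smul]
    push_cast
    ring
  rw [key]

end Stmt18Aux
namespace Stmt18Aux
open Module
variable {V : Type*} [AddCommGroup V] [Module ℚ V] (P : RootSystemData V)

lemma aminus_strip {α : V} (hα : α ∈ P.Rpos) {A : Set (Module.Dual ℚ V)}
    (hA : A ∈ Aminus P α) : A.Nonempty ∧ A ⊆ Strip α (-1) ∧ A ∈ finAlc P := by
  obtain ⟨hfA, hHm⟩ := hA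
  obtain ⟨hne, hstr⟩ := finAlc_strip P hα hfA
  refine ⟨hne, ?_, hfA⟩
  rcases hstr with h | h
  · exact h
  · exfalso
    obtain ⟨v, hv⟩ := hne
    have h1 : (0:ℚ) < v α := by
      have := (h hv).1; push_cast at this; linarith
    have h2 : v α < 0 := hHm hv
    linarith

lemma part1 {α : V} (hα : α ∈ P.Rpos) {A : Set (Module.Dual ℚ V)}
    (hA : A ∈ Aminus P α) : finAlc P ∩ Astring P α A = {A, up P α A} := by
  have hαR : α ∈ P.R := P.pos_subset hα
  obtain ⟨hne, hstrip, hfA⟩ := aminus_strip P hα hA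
  obtain ⟨hupne, hupstr, hupeq⟩ := up_strip P hαR hne hstrip
  have hup0 : up P α A = sAff α (P.coroot α) 0 '' A := by
    rw [hupeq]; norm_num
  have hupfin : up P α A ∈ finAlc P := by
    rw [hup0]; exact sAff0_image_finAlc P hα hfA
  ext S
  simp only [Set.mem_inter_iff, Astring, Set.mem_setOf_eq, Set.mem_insert_iff,
    Set.mem_singleton_iff]
  constructor
  · rintro ⟨hSf, n, (rfl | rfl)⟩
    · match n with
      | 0 => left; simp
      | 1 => right; simp
      | (n+2) =>
        exfalso
        obtain ⟨h1, h2⟩ := up_iter P hαR hne hstrip (n+2)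
        refine strip_not_finAlc P hα h1 h2 ?_ hSf
        left; push_cast; omega
    · match n with
      | 0 => left; simp
      | (n+1) =>
        exfalso
        obtain ⟨h1, h2⟩ := down_iter P hαR hne hstrip (n+1)
        refine strip_not_finAlc P hα h1 h2 ?_ hSf
        right; push_cast; omega
  · rintro (rfl | rfl)
    · exact ⟨hfA, 0, Or.inl (by simp)⟩
    · exact ⟨hupfin, 1, Or.inl (by simp)⟩

lemma part2 {α : V} (hα : α ∈ P.Rpos) {A : Set (Module.Dual ℚ V)}
    (hA : A ∈ (up P α) '' Aminus P α) :
    finAlc P ∩ Astring P α A = {down P α A, A} := by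
  have hαR : α ∈ P.R := P.pos_subset hα
  obtain ⟨B, hB, rfl⟩ := hA
  obtain ⟨hBne, hBstrip, hfB⟩ := aminus_strip P hα hB
  obtain ⟨hAne, hAstr, hAeq⟩ := up_strip P hαR hBne hBstrip
  have hAstr0 : up P α B ⊆ Strip α 0 := by
    have : (-1 : ℤ) + 1 = 0 := by norm_num
    rwa [this] at hAstr
  have hup0 : up P α B = sAff α (P.coroot α) 0 '' B := by
    rw [hAeq]; norm_num
  have hAfin : up P α B ∈ finAlc P := by
    rw [hup0]; exact sAff0_image_finAlc P hα hfB
  obtain ⟨hdne, hdstr, hdeq⟩ := down_strip P hαR hAne hAstr0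
  have hdown : down P α (up P α B) = B := by
    rw [hdeq, hup0]
    exact sAff0_image_invol P hαR B
  ext S
  simp only [Set.mem_inter_iff, Astring, Set.mem_setOf_eq, Set.mem_insert_iff,
    Set.mem_singleton_iff]
  constructor
  · rintro ⟨hSf, n, (rfl | rfl)⟩
    · match n with
      | 0 => right; simp
      | (n+1) =>
        exfalso
        obtain ⟨h1, h2⟩ := up_iter P hαR hAne hAstr0 (n+1)
        refine strip_not_finAlc P hα h1 h2 ?_ hSf
        left; push_cast; omega
    · match n with
      | 0 => right; simp
      | 1 => left; simp
      | (n+2) =>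
        exfalso
        obtain ⟨h1, h2⟩ := down_iter P hαR hAne hAstr0 (n+2)
        refine strip_not_finAlc P hα h1 h2 ?_ hSf
        right; push_cast; omega
  · rintro (rfl | rfl)
    · rw [hdown]
      exact ⟨hfB, 1, Or.inr (by simp [hdown])⟩
    · exact ⟨hAfin, 0, Or.inl (by simp)⟩

end Stmt18Aux


/-- each `α`-string meets the set of finite Weyl group alcoves in
exactly two consecutive alcoves: `{A, α↑A}` if `A ∈ 𝒜⁻_α`, `{α↓A, A}` if `A ∈ 𝒜⁺_α`. -/
theorem stmt18 {V : Type*} [AddCommGroup V] [Module ℚ V] (P : RootSystemData V)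
    (α : V) (hα : α ∈ P.Rpos) (A : Set (Module.Dual ℚ V)) :
    (A ∈ Aminus P α → finAlc P ∩ Astring P α A = {A, up P α A}) ∧
    (A ∈ (up P α) '' Aminus P α → finAlc P ∩ Astring P α A = {down P α A, A}) ∧
    (A ∈ finAlc P → ∃ B ∈ finAlc P, finAlc P ∩ Astring P α A = {B, up P α B}) := by
  open Stmt18Aux in
  refine ⟨fun h => part1 P hα h, fun h => part2 P hα h, fun hfA => ?_⟩
  have hαR : α ∈ P.R := P.pos_subset hα
  obtain ⟨hne, hstr⟩ := Stmt18Aux.finAlc_strip P hα hfA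
  rcases hstr with h | h
  · -- A ∈ Aminus
    have hAm : A ∈ Aminus P α := by
      refine ⟨hfA, ?_⟩
      intro v hv
      have := (h hv).2
      push_cast at this
      show v α < ((0:ℤ):ℚ)
      push_cast
      linarith
    exact ⟨A, hfA, Stmt18Aux.part1 P hα hAm⟩
  · -- A is in the upper strip: B := sAff0 '' A
    set B : Set (Module.Dual ℚ V) := sAff α (P.coroot α) 0 '' A with hBdef
    have hBfin : B ∈ finAlc P := Stmt18Aux.sAff0_image_finAlc P hα hfA
    have hBne : B.Nonempty := hne.image _
    have hBstrip : B ⊆ Stmt18Aux.Strip α (-1) := by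
      rintro v ⟨v', hv', rfl⟩
      have h1 := (h hv').1
      have h2 := (h hv').2
      push_cast at h1 h2
      constructor
      · rw [Stmt18Aux.sAff_apply_self P hαR]; push_cast; linarith
      · rw [Stmt18Aux.sAff_apply_self P hαR]; push_cast; linarith
    have hBm : B ∈ Aminus P α := by
      refine ⟨hBfin, ?_⟩
      intro v hv
      have := (hBstrip hv).2
      show v α < ((0:ℤ):ℚ)
      push_cast at this ⊢
      linarith
    obtain ⟨hupBne, hupBstr, hupBeq⟩ := Stmt18Aux.up_strip P hαR hBne hBstrip
    have hupB : up P α B = A := by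
      rw [hupBeq]
      norm_num
      rw [hBdef]
      exact Stmt18Aux.sAff0_image_invol P hαR A
    have hAup : A ∈ (up P α) '' Aminus P α := ⟨B, hBm, hupB⟩
    have := Stmt18Aux.part2 P hα hAup
    refine ⟨B, hBfin, ?_⟩
    rw [this, hupB]
    -- down A = B
    obtain ⟨_, _, hdeq⟩ := Stmt18Aux.down_strip P hαR hne
      (by rw [← hupB] at h ⊢; exact h)
    have hdA : down P α A = B := by
      rw [hdeq, hBdef]
    rw [hdA]
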